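/- Suppose quaternions ρ̂, ρ̃ ∈ ℍ with ρ̂ - ρ̃ invertible are given. Define ρ̃̂ = (ρ̂ - ρ̃) ρ̃ (ρ̂ - ρ̃)⁻¹ and ρ̂̃ = (ρ̂ - ρ̃) ρ̂ (ρ̂ - ρ̃)⁻¹. Then the permutability identity (1 + λρ̃̂)(1 + λρ̂) = (1 + λρ̂̃)(1 + λρ̃) holds for all real λ. -/
import Mathlib


/-- Bianchi permutability identity: with `ρ̃̂ = (ρ̂-ρ̃) ρ̃ (ρ̂-ρ̃)⁻¹` and
`ρ̂̃ = (ρ̂-ρ̃) ρ̂ (ρ̂-ρ̃)⁻¹`, one has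
`(1 + λ ρ̃̂)(1 + λ ρ̂) = (1 + λ ρ̂̃)(1 + λ ρ̃)` for all real `λ`. -/
theorem bianchi_permutability (ρh ρt : Quaternion ℝ) (h : ρh - ρt ≠ 0) :
    ∀ lam : ℝ,
      (1 + lam • ((ρh - ρt) * ρt * (ρh - ρt)⁻¹)) * (1 + lam • ρh) =
      (1 + lam • ((ρh - ρt) * ρh * (ρh - ρt)⁻¹)) * (1 + lam • ρt) := by
  intro lam
  set d := ρh - ρt with hd
  set A := d * ρt * d⁻¹ with hA
  set B := d * ρh * d⁻¹ with hB
  have hc : d * d⁻¹ = 1 := mul_inv_cancel₀ h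
  have hc' : d⁻¹ * d = 1 := inv_mul_cancel₀ h
  have hBA : B = A + d := by
    rw [hA, hB]
    have : d * ρh = d * ρt + d * d := by rw [hd]; noncomm_ring
    rw [this, add_mul, mul_assoc d d d⁻¹, hc, mul_one]
  have hquad : A * ρh = B * ρt := by
    rw [hA, hB]
    have h1 : ρt * d⁻¹ = ρh * d⁻¹ - 1 := by
      have : ρt = ρh - d := by rw [hd]; abel
      rw [this, sub_mul, hc]
    have h2 : d⁻¹ * ρt = d⁻¹ * ρh - 1 := by
      have : ρt = ρh - d := by rw [hd]; abel
      rw [this, mul_sub, hc']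
    calc d * ρt * d⁻¹ * ρh = d * ((ρt * d⁻¹) * ρh) := by noncomm_ring
      _ = d * ((ρh * d⁻¹ - 1) * ρh) := by rw [h1]
      _ = d * (ρh * (d⁻¹ * ρh - 1)) := by noncomm_ring
      _ = d * (ρh * (d⁻¹ * ρt)) := by rw [h2]
      _ = d * ρh * d⁻¹ * ρt := by noncomm_ring
  have expand : ∀ X x : Quaternion ℝ,
      (1 + lam • X) * (1 + lam • x) = 1 + lam • X + lam • x + (lam * lam) • (X * x) := by
    intro X x
    simp only [mul_add, add_mul, one_mul, mul_one, smul_mul_smul_comm, mul_smul]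
    abel
  rw [expand, expand, hBA, hquad, hBA]
  simp only [smul_add, add_mul, smul_sub, hd]
  abel
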